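/- The page-granularity Oreo mapping is injective into masked space: if each of p pages (each of size 2^12) in the valid region is relocated to a different subregion but the masked addresses of distinct pages occupy disjoint intervals [start + k·2^12, start + (k+1)·2^12) for k < p, then the combined virtual-to-physical mapping (composing per-page Mask2Valid inverses) is injective on the union of the relocated page intervals. -/
import Mathlib


def Virt2Mask (start len v : ℕ) : ℕ := ((v - start) % len) + start

/-- Page-granularity Oreo mapping is injective into masked space. -/
theorem page_granularity_injective (start len p : ℕ)
    (hdvd : 2 ^ 12 ∣ len) (hp : p * 2 ^ 12 ≤ len)
    (idx : ℕ → ℕ) :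
    Set.InjOn (Virt2Mask start len)
      (⋃ k ∈ Set.Iio p,
        Set.Ico (start + idx k * len + k * 2 ^ 12)
                (start + idx k * len + (k + 1) * 2 ^ 12)) := by
  intro a ha b hb heq
  simp only [Set.mem_iUnion, Set.mem_Ico, Set.mem_Iio, exists_prop] at ha hb
  obtain ⟨j, hj, haj1, haj2⟩ := ha
  obtain ⟨k, hk, hbk1, hbk2⟩ := hb
  have hjl : (j + 1) * 2 ^ 12 ≤ len :=
    le_trans (Nat.mul_le_mul_right _ hj) hp
  have hkl : (k + 1) * 2 ^ 12 ≤ len :=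
    le_trans (Nat.mul_le_mul_right _ hk) hp
  have hmoda : (a - start) % len = a - start - idx j * len := by
    have h1 : a - start = (a - start - idx j * len) + idx j * len := by omega
    rw [h1, Nat.add_mul_mod_self_right, Nat.mod_eq_of_lt (by omega)]; omega
  have hmodb : (b - start) % len = b - start - idx k * len := by
    have h1 : b - start = (b - start - idx k * len) + idx k * len := by omega
    rw [h1, Nat.add_mul_mod_self_right, Nat.mod_eq_of_lt (by omega)]; omega
  simp only [Virt2Mask, hmoda, hmodb] at heq
  have hjk : j = k := by omega
  subst hjk
  omega
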